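/- Let P be an lpm polynomial, i.e., P(X) = Σ_{J⊆[n]} c_J det(X_J) on symmetric n×n matrices, and let Π be a partition of [n]. If A is block diagonal with respect to Π, then the gradient ∇P(A) (as a symmetric matrix) is also block diagonal with respect to Π. -/

import Mathlib

open MvPolynomial

/-- The generic symmetric matrix of indeterminates: entry `(i,j)` is the
variable indexed by the unordered pair `{i,j}`, so `X_{ij} = X_{ji}`. -/
noncomputable def genericSymMatrix (n : ℕ) :
    Matrix (Fin n) (Fin n) (MvPolynomial (Sym2 (Fin n)) ℝ) :=
  Matrix.of fun i j => X (Sym2.mk i j)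

/-- The principal minor (as a polynomial) indexed by a subset `J`. -/
noncomputable def genericPrincipalMinor (n : ℕ) (J : Finset (Fin n)) :
    MvPolynomial (Sym2 (Fin n)) ℝ :=
  ((genericSymMatrix n).submatrix (fun i : J => (i : Fin n))
    (fun i : J => (i : Fin n))).det

/-- The generic lpm polynomial `P(X) = Σ_{J⊆[n]} c_J det(X_J)`. -/
noncomputable def genericLpm (n : ℕ) (c : Finset (Fin n) → ℝ) :
    MvPolynomial (Sym2 (Fin n)) ℝ :=
  ∑ J : Finset (Fin n), C (c J) * genericPrincipalMinor n J

section Aux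

variable {n : ℕ}

/-- The sign function on unordered pairs coming from a sign vector `d`. -/
noncomputable def sym2Sign (d : Fin n → ℝ) : Sym2 (Fin n) → ℝ :=
  Sym2.lift ⟨fun k l => d k * d l, fun k l => mul_comm _ _⟩

@[simp] lemma sym2Sign_mk (d : Fin n → ℝ) (k l : Fin n) :
    sym2Sign d (Sym2.mk k l) = d k * d l := rfl

/-- The substitution scaling each variable by its sign. -/
noncomputable def signSubst (d : Fin n → ℝ) :
    MvPolynomial (Sym2 (Fin n)) ℝ →ₐ[ℝ] MvPolynomial (Sym2 (Fin n)) ℝ :=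
  bind₁ (fun u => C (sym2Sign d u) * X u)

@[simp] lemma signSubst_X (d : Fin n → ℝ) (u : Sym2 (Fin n)) :
    signSubst d (X u) = C (sym2Sign d u) * X u := by
  simp [signSubst]

lemma signSubst_comm_pderiv (d : Fin n → ℝ) (s : Sym2 (Fin n))
    (p : MvPolynomial (Sym2 (Fin n)) ℝ) :
    pderiv s (signSubst d p) = C (sym2Sign d s) * signSubst d (pderiv s p) := by
  classical
  induction p using MvPolynomial.induction_on with
  | C a => simp [signSubst, pderiv_C]
  | add p q hp hq => simp [map_add, hp, hq]; ring
  | mul_X p u hp =>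
    rw [map_mul (signSubst d), signSubst_X]
    rw [pderiv_mul (i := s) (f := (signSubst d) p) (g := C (sym2Sign d u) * X u)]
    rw [pderiv_mul (i := s) (f := p) (g := X u)]
    rw [hp]
    rw [map_add (signSubst d), map_mul (signSubst d), map_mul (signSubst d), signSubst_X]
    have h1 : (pderiv s) (C (sym2Sign d u) * X u) = C (sym2Sign d u) * pderiv s (X u) := by
      rw [pderiv_mul, pderiv_C]; ring
    rw [h1]
    by_cases h : u = s
    · subst h
      rw [pderiv_X_self]
      rw [show (signSubst d) (1 : MvPolynomial (Sym2 (Fin n)) ℝ) = 1 from map_one _]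
      ring
    · rw [pderiv_X_of_ne h]
      rw [show (signSubst d) (0 : MvPolynomial (Sym2 (Fin n)) ℝ) = 0 from map_zero _]
      ring

lemma signSubst_genericPrincipalMinor (d : Fin n → ℝ) (hd : ∀ k, d k * d k = 1)
    (J : Finset (Fin n)) :
    signSubst d (genericPrincipalMinor n J) = genericPrincipalMinor n J := by
  classical
  unfold genericPrincipalMinor
  rw [AlgHom.map_det, AlgHom.mapMatrix_apply]
  have hM : ((genericSymMatrix n).submatrix (fun i : J => (i : Fin n))
      (fun i : J => (i : Fin n))).map (signSubst d)
      = Matrix.diagonal (fun a : J => (C (d (a : Fin n)) : MvPolynomial (Sym2 (Fin n)) ℝ)) *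
        ((genericSymMatrix n).submatrix (fun i : J => (i : Fin n)) (fun i : J => (i : Fin n))) *
        Matrix.diagonal (fun a : J => (C (d (a : Fin n)) : MvPolynomial (Sym2 (Fin n)) ℝ)) := by
    ext a b
    simp [Matrix.map_apply, Matrix.submatrix_apply, genericSymMatrix,
      Matrix.mul_apply, Matrix.diagonal_apply, Finset.mul_sum, Finset.sum_mul,
      Finset.sum_ite_eq, Finset.sum_ite_eq']
    ring
  rw [hM, Matrix.det_mul, Matrix.det_mul, Matrix.det_diagonal]
  have : (∏ a : J, (C (d (a : Fin n)) : MvPolynomial (Sym2 (Fin n)) ℝ)) *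
      ((genericSymMatrix n).submatrix (fun i : J => (i : Fin n))
        (fun i : J => (i : Fin n))).det *
      (∏ a : J, (C (d (a : Fin n)) : MvPolynomial (Sym2 (Fin n)) ℝ))
      = (∏ a : J, (C (d (a : Fin n)) * C (d (a : Fin n)) : MvPolynomial (Sym2 (Fin n)) ℝ)) *
        ((genericSymMatrix n).submatrix (fun i : J => (i : Fin n))
          (fun i : J => (i : Fin n))).det := by
    rw [Finset.prod_mul_distrib]; ring
  rw [this]
  have : (∏ a : J, (C (d (a : Fin n)) * C (d (a : Fin n)) : MvPolynomial (Sym2 (Fin n)) ℝ))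
      = 1 := by
    rw [Finset.prod_eq_one]
    intro a _
    rw [← map_mul, hd, map_one]
  rw [this, one_mul]

lemma signSubst_genericLpm (d : Fin n → ℝ) (hd : ∀ k, d k * d k = 1)
    (c : Finset (Fin n) → ℝ) :
    signSubst d (genericLpm n c) = genericLpm n c := by
  unfold genericLpm
  rw [map_sum]
  refine Finset.sum_congr rfl fun J _ => ?_
  rw [map_mul, signSubst_genericPrincipalMinor d hd J]
  simp [signSubst]

lemma eval_signSubst (d : Fin n → ℝ) (A : Sym2 (Fin n) → ℝ)
    (p : MvPolynomial (Sym2 (Fin n)) ℝ) :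
    eval A (signSubst d p) = eval (fun u => sym2Sign d u * A u) p := by
  induction p using MvPolynomial.induction_on with
  | C a => simp [signSubst]
  | add p q hp hq => simp [map_add, hp, hq]
  | mul_X p u hp => simp [map_mul, signSubst_X, hp]

end Aux

/-- Let `P` be an lpm polynomial and `∼` an equivalence relation on `[n]`
(a partition into blocks). If `A` is a symmetric matrix (given as a function
on unordered pairs) that is block diagonal with respect to the partition, then
the gradient `∇P(A)` is block diagonal as well: all its off-block entries
`(∂P/∂X_{ij})(A)` with `i ≁ j` vanish. -/
theorem gradient_lpm_block_diagonal {n : ℕ} (c : Finset (Fin n) → ℝ)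
    (r : Fin n → Fin n → Prop) (hr : Equivalence r) (A : Sym2 (Fin n) → ℝ)
    (hA : ∀ i j, ¬ r i j → A (Sym2.mk i j) = 0) :
    ∀ i j, ¬ r i j → eval A (pderiv (Sym2.mk i j) (genericLpm n c)) = 0 := by
  classical
  intro i j hij
  set d : Fin n → ℝ := fun k => if r k i then 1 else -1 with hd_def
  have hd : ∀ k, d k * d k = 1 := by
    intro k; by_cases h : r k i <;> simp [hd_def, h]
  set s : Sym2 (Fin n) := Sym2.mk i j
  have hsign : sym2Sign d s = -1 := by
    have hji : ¬ r j i := fun h => hij (hr.symm h)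
    simp [s, hd_def, hr.refl i, hji]
  have hAfix : (fun u => sym2Sign d u * A u) = A := by
    funext u
    induction u using Sym2.ind with
    | _ k l =>
      by_cases h : r k l
      · have : d k = d l := by
          by_cases hk : r k i
          · have : r l i := hr.trans (hr.symm h) hk
            simp [hd_def, hk, this]
          · have : ¬ r l i := fun hl => hk (hr.trans h hl)
            simp [hd_def, hk, this]
        rw [sym2Sign_mk, this, hd, one_mul]
      · simp [hA k l h]
  have key : eval A (pderiv s (genericLpm n c))
      = -(eval A (pderiv s (genericLpm n c))) := by
    conv_lhs => rw [← signSubst_genericLpm d hd c]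
    rw [signSubst_comm_pderiv, map_mul, eval_C, hsign, eval_signSubst, hAfix]
    ring
  linarith
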